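/- Let p be a prime and n ≥ 1. For ζ ∈ ℂ, the number of pairs (ξ, η) of primitive p^n-th roots of unity in ℂ with ξ·η = ζ equals: φ(p^n) − p^{n−1} if ζ is a primitive p^n-th root of unity; φ(p^n) if ζ is a p^{n−1}-th root of unity (i.e. ζ^{p^{n−1}} = 1, including ζ = 1); and 0 otherwise. Here φ(p^n) = p^n − p^{n−1} is Euler's totient function. -/

import Mathlib

open scoped Classical

/-- For a prime `p` and `n ≥ 1`, the number of pairs `(ξ, η)` of primitive
`p^n`-th roots of unity in `ℂ` with `ξ * η = ζ` is: `φ(p^n) - p^(n-1)` if `ζ`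
is a primitive `p^n`-th root of unity, `φ(p^n)` if `ζ` is a `p^(n-1)`-th root
of unity, and `0` otherwise. -/
theorem mul_primitiveRoots_prime_pow_self (p n : ℕ) (hp : p.Prime) (hn : 1 ≤ n)
    (ζ : ℂ) :
    {q : ℂ × ℂ | IsPrimitiveRoot q.1 (p ^ n) ∧ IsPrimitiveRoot q.2 (p ^ n) ∧
      q.1 * q.2 = ζ}.ncard =
      if IsPrimitiveRoot ζ (p ^ n) then Nat.totient (p ^ n) - p ^ (n - 1)
      else if ζ ^ (p ^ (n - 1)) = 1 then Nat.totient (p ^ n)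
      else 0 := by
  have hp1 : 1 < p := hp.one_lt
  have hMN : p ^ (n - 1) * p = p ^ n := by rw [← pow_succ]; congr 1; omega
  have hM0 : 0 < p ^ (n - 1) := pow_pos hp.pos _
  have hN0 : 0 < p ^ n := pow_pos hp.pos _
  have hMltN : p ^ (n - 1) < p ^ n := by
    exact Nat.pow_lt_pow_right hp1 (by omega)
  -- key criterion for primitivity
  have key : ∀ x : ℂ, x ^ (p ^ n) = 1 → x ^ (p ^ (n - 1)) ≠ 1 →
      IsPrimitiveRoot x (p ^ n) := by
    intro x h1 h2
    have hdvd : orderOf x ∣ p ^ n := orderOf_dvd_of_pow_eq_one h1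
    obtain ⟨k, hk, hke⟩ := (Nat.dvd_prime_pow hp).mp hdvd
    have hkn : k = n := by
      by_contra hne
      have hk' : k ≤ n - 1 := by omega
      exact h2 (orderOf_dvd_iff_pow_eq_one.mp (hke ▸ pow_dvd_pow p hk'))
    have ho : orderOf x = p ^ n := by rw [hke, hkn]
    exact ⟨h1, fun l hl => ho ▸ orderOf_dvd_of_pow_eq_one hl⟩
  have primM : ∀ x : ℂ, IsPrimitiveRoot x (p ^ n) → x ^ (p ^ (n - 1)) ≠ 1 := by
    intro x hx h
    have h1 := hx.dvd_of_pow_eq_one _ h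
    have h2 := Nat.le_of_dvd hM0 h1
    omega
  -- rewrite the set of pairs as the image of a set of first coordinates
  have hSeq : {q : ℂ × ℂ | IsPrimitiveRoot q.1 (p ^ n) ∧ IsPrimitiveRoot q.2 (p ^ n) ∧
      q.1 * q.2 = ζ} = (fun ξ : ℂ => (ξ, ζ * ξ⁻¹)) ''
      {ξ : ℂ | IsPrimitiveRoot ξ (p ^ n) ∧ IsPrimitiveRoot (ζ * ξ⁻¹) (p ^ n)} := by
    ext ⟨a, b⟩
    simp only [Set.mem_setOf_eq, Set.mem_image, Prod.mk.injEq]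
    constructor
    · rintro ⟨ha, hb, hab⟩
      have ha0 : a ≠ 0 := ha.ne_zero hN0.ne'
      have hb' : ζ * a⁻¹ = b := by
        rw [← hab, mul_comm a b, mul_assoc, mul_inv_cancel₀ ha0, mul_one]
      exact ⟨a, ⟨ha, hb' ▸ hb⟩, rfl, hb'⟩
    · rintro ⟨x, ⟨hx, hx'⟩, rfl, rfl⟩
      have hx0 : x ≠ 0 := hx.ne_zero hN0.ne'
      exact ⟨hx, hx', by field_simp⟩
  rw [hSeq, Set.ncard_image_of_injOn (fun x _ y _ h => congrArg Prod.fst h)]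
  have hT : {ξ : ℂ | IsPrimitiveRoot ξ (p ^ n) ∧ IsPrimitiveRoot (ζ * ξ⁻¹) (p ^ n)} =
      ↑((primitiveRoots (p ^ n) ℂ).filter
        (fun ξ => IsPrimitiveRoot (ζ * ξ⁻¹) (p ^ n))) := by
    ext x
    simp [mem_primitiveRoots hN0]
  rw [hT, Set.ncard_coe_finset]
  by_cases hζN : ζ ^ (p ^ n) = 1
  · by_cases hζM : ζ ^ (p ^ (n - 1)) = 1
    · -- ζ is a p^(n-1)-th root of unity
      have h1 : ¬ IsPrimitiveRoot ζ (p ^ n) := fun h => primM ζ h hζM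
      rw [if_neg h1, if_pos hζM]
      have hfull : (primitiveRoots (p ^ n) ℂ).filter
          (fun ξ => IsPrimitiveRoot (ζ * ξ⁻¹) (p ^ n)) = primitiveRoots (p ^ n) ℂ := by
        apply Finset.filter_true_of_mem
        intro ξ hξ
        rw [mem_primitiveRoots hN0] at hξ
        have hξ0 : ξ ≠ 0 := hξ.ne_zero hN0.ne'
        apply key
        · rw [mul_pow, hζN, one_mul, inv_pow, hξ.pow_eq_one, inv_one]
        · rw [mul_pow, hζM, one_mul, inv_pow]
          intro h
          exact primM ξ hξ (by rw [← inv_inv (ξ ^ (p ^ (n-1))), h, inv_one])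
      rw [hfull, (Complex.isPrimitiveRoot_exp _ hN0.ne').card_primitiveRoots]
    · -- ζ is a primitive p^n-th root of unity
      have hζ : IsPrimitiveRoot ζ (p ^ n) := key ζ hζN hζM
      have hζ0 : ζ ≠ 0 := hζ.ne_zero hN0.ne'
      rw [if_pos hζ]
      have hcong : (primitiveRoots (p ^ n) ℂ).filter
          (fun ξ => IsPrimitiveRoot (ζ * ξ⁻¹) (p ^ n)) =
          (primitiveRoots (p ^ n) ℂ).filter
          (fun ξ => ¬ ξ ^ (p ^ (n - 1)) = ζ ^ (p ^ (n - 1))) := by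
        apply Finset.filter_congr
        intro ξ hξ
        rw [mem_primitiveRoots hN0] at hξ
        have hξ0 : ξ ≠ 0 := hξ.ne_zero hN0.ne'
        have hζM0 : ζ ^ (p ^ (n - 1)) ≠ 0 := pow_ne_zero _ hζ0
        constructor
        · intro h hEq
          apply primM _ h
          rw [mul_pow, inv_pow, hEq, mul_inv_cancel₀ hζM0]
        · intro h
          apply key
          · rw [mul_pow, hζN, one_mul, inv_pow, hξ.pow_eq_one, inv_one]
          · intro hEq
            apply h
            rw [mul_pow, inv_pow] at hEq
            exact ((mul_inv_eq_one₀ (pow_ne_zero _ hξ0)).mp hEq).symm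
      rw [hcong]
      -- the complementary filter is the image of the p^(n-1)-th roots of unity
      have himg : (primitiveRoots (p ^ n) ℂ).filter
          (fun ξ => ξ ^ (p ^ (n - 1)) = ζ ^ (p ^ (n - 1))) =
          (Polynomial.nthRootsFinset (p ^ (n - 1)) (1 : ℂ)).image (fun μ => ζ * μ) := by
        ext x
        simp only [Finset.mem_filter, Finset.mem_image,
          Polynomial.mem_nthRootsFinset hM0 (1 : ℂ), mem_primitiveRoots hN0]
        constructor
        · rintro ⟨hx, hxM⟩
          refine ⟨ζ⁻¹ * x, ?_, ?_⟩
          · rw [mul_pow, inv_pow, hxM, inv_mul_cancel₀ (pow_ne_zero _ hζ0)]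
          · rw [← mul_assoc, mul_inv_cancel₀ hζ0, one_mul]
        · rintro ⟨μ, hμ, rfl⟩
          have hxM : (ζ * μ) ^ (p ^ (n - 1)) = ζ ^ (p ^ (n - 1)) := by
            rw [mul_pow, hμ, mul_one]
          refine ⟨key _ ?_ ?_, hxM⟩
          · rw [mul_pow, hζN, one_mul, ← hMN, pow_mul, hμ, one_pow]
          · rw [hxM]; exact hζM
      have hcardimg : ((primitiveRoots (p ^ n) ℂ).filter
          (fun ξ => ξ ^ (p ^ (n - 1)) = ζ ^ (p ^ (n - 1)))).card = p ^ (n - 1) := by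
        rw [himg, Finset.card_image_of_injective _ (mul_right_injective₀ hζ0),
          (Complex.isPrimitiveRoot_exp _ hM0.ne').card_nthRootsFinset]
      have hsplit := Finset.card_filter_add_card_filter_not
        (s := primitiveRoots (p ^ n) ℂ)
        (p := fun ξ => ξ ^ (p ^ (n - 1)) = ζ ^ (p ^ (n - 1)))
      rw [(Complex.isPrimitiveRoot_exp _ hN0.ne').card_primitiveRoots, hcardimg] at hsplit
      omega
  · -- ζ is not a p^n-th root of unity at all
    have h1 : ¬ IsPrimitiveRoot ζ (p ^ n) := fun h => hζN h.pow_eq_one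
    have h2 : ¬ ζ ^ (p ^ (n - 1)) = 1 := fun h => hζN (by
      rw [← hMN, pow_mul, h, one_pow])
    rw [if_neg h1, if_neg h2]
    rw [Finset.card_eq_zero, Finset.filter_eq_empty_iff]
    intro ξ hξ
    rw [mem_primitiveRoots hN0] at hξ
    have hξ0 : ξ ≠ 0 := hξ.ne_zero hN0.ne'
    intro h
    apply hζN
    have : ζ = ξ * (ζ * ξ⁻¹) := by field_simp
    rw [this, mul_pow, hξ.pow_eq_one, one_mul, h.pow_eq_one]
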